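/- For a black edge ℓ = n e₁ − n e₂ with n > 1 and 2n ≤ 2q, the polynomial ℓ(ξ) = (1/(q+1))(n ∂A_{q+1}/∂ξ₁ − n ∂A_{q+1}/∂ξ₂) contains the monomial ξ₂^{n−1} ξ₃^{q+1−n} with nonzero coefficient n · (q!/((n−1)!(q+1−n)!)) · ((q+1)!/((n−1)!(q+1−n)!)) · (1 − 1/n); in particular ℓ(ξ) has a monomial divisible by neither ξ₁^n nor ξ₂^n. -/

import Mathlib

open Finset MvPolynomial

/-- `A_r(ξ) = Σ_{β ∈ ℕ^m, |β|₁ = r} multinomial(r,β)² ξ^β` over `ℚ`. -/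
noncomputable def Apoly (m r : ℕ) : MvPolynomial (Fin m) ℚ :=
  ∑ β ∈ (Fintype.piFinset fun _ : Fin m => Finset.range (r + 1)).filter
      (fun β => ∑ i, β i = r),
    MvPolynomial.C ((Nat.multinomial Finset.univ β : ℚ) ^ 2) *
      ∏ i, MvPolynomial.X i ^ β i


lemma coeff_pderiv_aux {m : ℕ} (i : Fin m) (p : MvPolynomial (Fin m) ℚ)
    (d : Fin m →₀ ℕ) :
    MvPolynomial.coeff d (MvPolynomial.pderiv i p) =
      ((d i : ℚ) + 1) * MvPolynomial.coeff (d + Finsupp.single i 1) p := by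
  induction p using MvPolynomial.induction_on' with
  | add p q hp hq => simp [hp, hq]; ring
  | monomial s a =>
    rw [pderiv_monomial, coeff_monomial, coeff_monomial]
    by_cases hs : s = d + Finsupp.single i 1
    · subst hs
      have h1 : d + Finsupp.single i 1 - Finsupp.single i 1 = d := by
        ext j; simp [Finsupp.tsub_apply, Finsupp.single_apply]
      rw [if_pos h1, if_pos rfl]
      simp only [Finsupp.add_apply, Finsupp.single_eq_same]
      push_cast; ring
    · rw [if_neg hs]
      by_cases hd : s - Finsupp.single i 1 = d
      · have hsi : s i = 0 := by
          by_contra hne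
          apply hs
          ext j
          have h := congrArg (fun f : Fin m →₀ ℕ => f j) hd
          simp only [Finsupp.tsub_apply, Finsupp.single_apply, Finsupp.coe_add,
            Pi.add_apply] at h ⊢
          by_cases hji : i = j
          · subst hji; simp at h ⊢; omega
          · simp [hji] at h ⊢; omega
        rw [if_pos hd, hsi]
        push_cast; ring
      · rw [if_neg hd]; ring


lemma coeff_Apoly {m : ℕ} (r : ℕ) (d : Fin m →₀ ℕ) (h : ∑ i, d i = r) :
    MvPolynomial.coeff d (Apoly m r) = (Nat.multinomial Finset.univ ⇑d : ℚ) ^ 2 := by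
  have key : ∀ β : Fin m → ℕ,
      (MvPolynomial.C ((Nat.multinomial Finset.univ β : ℚ) ^ 2) *
        ∏ i, MvPolynomial.X i ^ β i : MvPolynomial (Fin m) ℚ) =
      MvPolynomial.monomial (Finsupp.equivFunOnFinite.symm β)
        ((Nat.multinomial Finset.univ β : ℚ) ^ 2) := by
    intro β
    rw [show (∏ i, (MvPolynomial.X i : MvPolynomial (Fin m) ℚ) ^ β i) =
        MvPolynomial.monomial (Finsupp.equivFunOnFinite.symm β) (1 : ℚ) from ?_,
      MvPolynomial.C_mul_monomial, mul_one]
    rw [MvPolynomial.monic_monomial_eq, Finsupp.prod_fintype]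
    · simp
    · intro i; simp
  unfold Apoly
  rw [MvPolynomial.coeff_sum]
  rw [Finset.sum_eq_single_of_mem (⇑d)]
  · rw [key, MvPolynomial.coeff_monomial, if_pos (by simp)]
  · simp only [Finset.mem_filter, Fintype.mem_piFinset, Finset.mem_range]
    constructor
    · intro i
      have : d i ≤ ∑ j, d j := Finset.single_le_sum (fun j _ => Nat.zero_le _) (mem_univ i)
      omega
    · exact h
  · intro β _ hβ
    rw [key, MvPolynomial.coeff_monomial, if_neg]
    intro hc
    apply hβ
    rw [← hc]; rfl

lemma sum_apply_single {m : ℕ} (j : Fin m) (a : ℕ) :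
    ∑ i, (Finsupp.single j a) i = a := by
  simp [Finsupp.single_apply]

lemma multinomial_triple {m : ℕ} (j0 j1 j2 : Fin m) (h01 : j0 ≠ j1) (h02 : j0 ≠ j2)
    (h12 : j1 ≠ j2) (a b c : ℕ) :
    (Nat.multinomial Finset.univ
        ⇑(Finsupp.single j0 a + Finsupp.single j1 b + Finsupp.single j2 c) : ℚ) =
      ((a + b + c).factorial : ℚ) /
        ((a.factorial : ℚ) * (b.factorial : ℚ) * (c.factorial : ℚ)) := by
  set g : Fin m →₀ ℕ := Finsupp.single j0 a + Finsupp.single j1 b + Finsupp.single j2 c with hg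
  have hsum : ∑ i, g i = a + b + c := by
    simp only [hg, Finsupp.coe_add, Pi.add_apply, Finset.sum_add_distrib, sum_apply_single]
  have hprod : ∏ i, (g i).factorial = a.factorial * b.factorial * c.factorial := by
    rw [← Finset.prod_subset (Finset.subset_univ ({j0, j1, j2} : Finset (Fin m)))
      (fun x _ hx => ?_)]
    · rw [Finset.prod_insert (by simp [h01, h02]), Finset.prod_insert (by simp [h12]),
        Finset.prod_singleton]
      have g0 : g j0 = a := by
        simp [hg, Finsupp.single_apply, h01, h02, h01.symm, h02.symm]
      have g1 : g j1 = b := by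
        simp [hg, Finsupp.single_apply, h01, h12, h01.symm, h12.symm]
      have g2 : g j2 = c := by
        simp [hg, Finsupp.single_apply, h02, h12, h02.symm, h12.symm]
      rw [g0, g1, g2, mul_assoc]
    · simp only [Finset.mem_insert, Finset.mem_singleton, not_or] at hx
      have : g x = 0 := by
        simp [hg, Finsupp.single_apply, Ne.symm hx.1, Ne.symm hx.2.1, Ne.symm hx.2.2]
      simp [this]
  have spec := Nat.multinomial_spec Finset.univ (⇑g)
  rw [hprod, hsum] at spec
  have hne : ((a.factorial : ℚ) * (b.factorial : ℚ) * (c.factorial : ℚ)) ≠ 0 := by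
    positivity
  rw [eq_div_iff hne]
  rw [mul_comm]
  exact_mod_cast congrArg (fun x : ℕ => (x : ℚ)) spec

lemma sum_triple_apply {m : ℕ} (j0 j1 j2 : Fin m) (a b c : ℕ) :
    ∑ i, (Finsupp.single j0 a + Finsupp.single j1 b + Finsupp.single j2 c) i
      = a + b + c := by
  simp only [Finsupp.coe_add, Pi.add_apply, Finset.sum_add_distrib, sum_apply_single]

/-- for the black edge ℓ = n e₁ − n e₂ with 1 < n ≤ q (so
2n ≤ 2q) and m ≥ 3, the polynomial ℓ(ξ) = (1/(q+1))(n ∂A_{q+1}/∂ξ₁ −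
n ∂A_{q+1}/∂ξ₂) contains the monomial ξ₂^{n−1} ξ₃^{q+1−n} with the nonzero
coefficient n · (q!/((n−1)!(q+1−n)!)) · ((q+1)!/((n−1)!(q+1−n)!)) · (1 − 1/n);
in particular ℓ(ξ) has a monomial divisible by neither ξ₁ⁿ nor ξ₂ⁿ. -/
theorem black_edge_monomial (q m n : ℕ) (hm : 3 ≤ m) (hn : 1 < n)
    (hnq : n ≤ q) :
    let i0 : Fin m := ⟨0, by omega⟩
    let i1 : Fin m := ⟨1, by omega⟩
    let i2 : Fin m := ⟨2, by omega⟩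
    let lpoly : MvPolynomial (Fin m) ℚ :=
      ((q : ℚ) + 1)⁻¹ •
        ((n : ℤ) • MvPolynomial.pderiv i0 (Apoly m (q + 1)) -
          (n : ℤ) • MvPolynomial.pderiv i1 (Apoly m (q + 1)))
    MvPolynomial.coeff
        (Finsupp.single i1 (n - 1) + Finsupp.single i2 (q + 1 - n)) lpoly =
      (n : ℚ) * ((q.factorial : ℚ) / ((n - 1).factorial * (q + 1 - n).factorial)) *
        (((q + 1).factorial : ℚ) / ((n - 1).factorial * (q + 1 - n).factorial)) *
        (1 - 1 / (n : ℚ)) ∧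
    (n : ℚ) * ((q.factorial : ℚ) / ((n - 1).factorial * (q + 1 - n).factorial)) *
        (((q + 1).factorial : ℚ) / ((n - 1).factorial * (q + 1 - n).factorial)) *
        (1 - 1 / (n : ℚ)) ≠ 0 := by
  intro i0 i1 i2 lpoly
  have h01 : i0 ≠ i1 := by simp [i0, i1, Fin.ext_iff]
  have h02 : i0 ≠ i2 := by simp [i0, i2, Fin.ext_iff]
  have h12 : i1 ≠ i2 := by simp [i1, i2, Fin.ext_iff]
  set d : Fin m →₀ ℕ := Finsupp.single i1 (n - 1) + Finsupp.single i2 (q + 1 - n) with hd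
  -- nonzero facts
  have hn0 : (n : ℚ) ≠ 0 := Nat.cast_ne_zero.mpr (by omega)
  have hq1 : ((q : ℚ) + 1) ≠ 0 := by positivity
  have hF1 : ((n - 1).factorial : ℚ) ≠ 0 := Nat.cast_ne_zero.mpr (Nat.factorial_ne_zero _)
  have hF2 : ((q + 1 - n).factorial : ℚ) ≠ 0 := Nat.cast_ne_zero.mpr (Nat.factorial_ne_zero _)
  have hFq : ((q).factorial : ℚ) ≠ 0 := Nat.cast_ne_zero.mpr (Nat.factorial_ne_zero _)
  have hFq1 : (((q + 1)).factorial : ℚ) ≠ 0 := Nat.cast_ne_zero.mpr (Nat.factorial_ne_zero _)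
  have hlast : (1 - 1 / (n : ℚ)) ≠ 0 := by
    have : (1 : ℚ) / n < 1 := by
      rw [div_lt_one (by positivity)]
      exact_mod_cast hn
    intro h
    rw [sub_eq_zero] at h
    exact absurd h.symm (ne_of_lt this)
  constructor
  · -- the coefficient computation
    have e1 : d + Finsupp.single i1 1 =
        Finsupp.single i1 n + Finsupp.single i2 (q + 1 - n) + Finsupp.single i0 0 := by
      rw [Finsupp.single_zero, add_zero, hd, add_right_comm, ← Finsupp.single_add]
      congr 2
      omega
    have s0 : ∑ j, (d + Finsupp.single i0 1 : Fin m →₀ ℕ) j = q + 1 := by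
      rw [hd, sum_triple_apply]; omega
    have s1 : ∑ j, (d + Finsupp.single i1 1 : Fin m →₀ ℕ) j = q + 1 := by
      rw [e1, sum_triple_apply]; omega
    have hc0 : MvPolynomial.coeff (d + Finsupp.single i0 1) (Apoly m (q + 1)) =
        (((q + 1).factorial : ℚ) /
          (((n - 1).factorial : ℚ) * ((q + 1 - n).factorial : ℚ) * 1)) ^ 2 := by
      rw [coeff_Apoly (q + 1) _ s0, hd,
        multinomial_triple i1 i2 i0 h12 h01.symm h02.symm,
        show n - 1 + (q + 1 - n) + 1 = q + 1 from by omega, Nat.factorial_one,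
        Nat.cast_one]
    have hc1 : MvPolynomial.coeff (d + Finsupp.single i1 1) (Apoly m (q + 1)) =
        (((q + 1).factorial : ℚ) /
          ((n.factorial : ℚ) * ((q + 1 - n).factorial : ℚ) * 1)) ^ 2 := by
      rw [coeff_Apoly (q + 1) _ s1, e1,
        multinomial_triple i1 i2 i0 h12 h01.symm h02.symm,
        show n + (q + 1 - n) + 0 = q + 1 from by omega, Nat.factorial_zero,
        Nat.cast_one]
    have di0 : d i0 = 0 := by
      simp [hd, Finsupp.single_apply, h01.symm, h02.symm]
    have di1 : d i1 = n - 1 := by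
      simp [hd, Finsupp.single_apply, h12.symm]
    have hsplit : MvPolynomial.coeff d lpoly = ((q : ℚ) + 1)⁻¹ *
        ((n : ℚ) * MvPolynomial.coeff d (MvPolynomial.pderiv i0 (Apoly m (q + 1))) -
          (n : ℚ) * MvPolynomial.coeff d (MvPolynomial.pderiv i1 (Apoly m (q + 1)))) := by
      simp only [lpoly, MvPolynomial.coeff_smul, MvPolynomial.coeff_sub]
      simp only [smul_eq_mul, zsmul_eq_mul, Int.cast_natCast, mul_sub]
    rw [hsplit, coeff_pderiv_aux, coeff_pderiv_aux, hc0, hc1, di0, di1]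
    have hcast : ((n - 1 : ℕ) : ℚ) = (n : ℚ) - 1 := by
      push_cast [Nat.cast_sub hn.le]; ring
    have hQ1 : (((q + 1).factorial : ℕ) : ℚ) = ((q : ℚ) + 1) * (q.factorial : ℚ) := by
      push_cast [Nat.factorial_succ]; ring
    have hFn : ((n.factorial : ℕ) : ℚ) = (n : ℚ) * ((n - 1).factorial : ℚ) := by
      obtain ⟨k, rfl⟩ : ∃ k, n = k + 1 := ⟨n - 1, by omega⟩
      simp only [Nat.add_sub_cancel, Nat.factorial_succ]
      push_cast; ring
    rw [hcast, hQ1, hFn]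
    field_simp
    ring
  · exact mul_ne_zero (mul_ne_zero (mul_ne_zero hn0
      (div_ne_zero hFq (mul_ne_zero hF1 hF2)))
      (div_ne_zero hFq1 (mul_ne_zero hF1 hF2))) hlast
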